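/- For every p ∈ D_d, the set { f^σ : σ a selection } (equivalently, the set of extreme points of P(p)) is finite with cardinality ∏_{k : p_k > 0} C(d,k), the product of the binomial coefficients C(d,k) over the support of p. -/
import Mathlib

open Finset MeasureTheory Real

noncomputable section

/-- Weight of a binary vector: number of ones. -/
def wt {d : ℕ} (x : Fin d → Bool) : ℕ := (Finset.univ.filter (fun i => x i = true)).card

/-- The set `F_d` of `d`-variate Bernoulli pmfs. -/
def Fd (d : ℕ) : Set ((Fin d → Bool) → ℝ) :=
  {f | (∀ x, 0 ≤ f x) ∧ ∑ x, f x = 1}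

/-- The simplex `D_d` of pmfs on `{0,…,d}`. -/
def Dd (d : ℕ) : Set (Fin (d + 1) → ℝ) :=
  {p | (∀ k, 0 ≤ p k) ∧ ∑ k, p k = 1}

/-- The pmf of the sum of the coordinates: `s(f)_k = ∑_{x : w(x)=k} f(x)`. -/
def sumPmf {d : ℕ} (f : (Fin d → Bool) → ℝ) : Fin (d + 1) → ℝ :=
  fun k => ∑ x ∈ Finset.univ.filter (fun x : Fin d → Bool => wt x = (k : ℕ)), f x

/-- `P(p) = { f ∈ F_d : s(f) = p }`. -/
def Pp (d : ℕ) (p : Fin (d + 1) → ℝ) : Set ((Fin d → Bool) → ℝ) :=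
  {f | f ∈ Fd d ∧ sumPmf f = p}

/-- A selection: `σ(k)` is a binary vector of weight `k` for each `k`. -/
def IsSelection {d : ℕ} (σ : Fin (d + 1) → (Fin d → Bool)) : Prop :=
  ∀ k, wt (σ k) = (k : ℕ)

/-- The extremal pmf `f^σ`: mass `p_k` at `σ(k)`, zero elsewhere. -/
def extPmf {d : ℕ} (p : Fin (d + 1) → ℝ) (σ : Fin (d + 1) → (Fin d → Bool)) :
    (Fin d → Bool) → ℝ :=
  fun x => ∑ k, if σ k = x then p k else 0

lemma card_wt (d m : ℕ) :
    (Finset.univ.filter (fun x : Fin d → Bool => wt x = m)).card = d.choose m := by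
  rw [← Fintype.card_subtype]
  rw [Fintype.card_congr (show {x : Fin d → Bool // wt x = m} ≃ {s : Finset (Fin d) // s.card = m} from
    { toFun := fun x => ⟨Finset.univ.filter (fun i => x.1 i = true), x.2⟩
      invFun := fun s => ⟨fun i => decide (i ∈ s.1), by simpa [wt] using s.2⟩
      left_inv := fun x => by ext i; simp
      right_inv := fun s => by ext i; simp })]
  rw [Fintype.card_finset_len, Fintype.card_fin]

lemma exists_wt (d m : ℕ) (hm : m ≤ d) : ∃ x : Fin d → Bool, wt x = m := by
  refine ⟨fun i => decide ((i : ℕ) < m), ?_⟩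
  unfold wt
  have : (Finset.univ.filter (fun i : Fin d => decide ((i:ℕ) < m) = true)).card
      = ((Finset.range d).filter (fun i => i < m)).card := by
    refine Finset.card_bij (fun i _ => (i : ℕ)) ?_ ?_ ?_
    · intro i hi; simp at hi ⊢; omega
    · intro a ha b hb h; exact Fin.ext h
    · intro j hj; simp at hj; exact ⟨⟨j, hj.1⟩, by simp [hj.2], rfl⟩
  rw [this]
  have h2 : (Finset.range d).filter (fun i => i < m) = Finset.range m := by
    ext j; simp; omega
  rw [h2, Finset.card_range]

lemma extPmf_sel_apply {d : ℕ} (p : Fin (d + 1) → ℝ) (σ : Fin (d + 1) → (Fin d → Bool))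
    (hσ : IsSelection σ) (k : Fin (d + 1)) : extPmf p σ (σ k) = p k := by
  unfold extPmf
  rw [Finset.sum_eq_single k]
  · simp
  · intro j _ hj
    have hne : σ j ≠ σ k := fun h => hj (Fin.ext (by rw [← hσ j, ← hσ k, h]))
    simp [hne]
  · simp

/-- the set of extremal pmfs is finite with cardinality
`∏_{k : p_k > 0} C(d,k)`. -/
theorem card_extremals (d : ℕ) (hd : 1 ≤ d) (p : Fin (d + 1) → ℝ) (hp : p ∈ Dd d) :
    {g | ∃ σ, IsSelection σ ∧ g = extPmf p σ}.Finite ∧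
      {g | ∃ σ, IsSelection σ ∧ g = extPmf p σ}.ncard =
        ∏ k ∈ Finset.univ.filter (fun k : Fin (d + 1) => 0 < p k), Nat.choose d (k : ℕ) := by
  classical
  obtain ⟨σ₀, hσ₀⟩ : ∃ σ₀ : Fin (d+1) → Fin d → Bool, IsSelection σ₀ := by
    choose g hg using fun k : Fin (d+1) => exists_wt d (k : ℕ) (Nat.lt_succ_iff.mp k.isLt)
    exact ⟨g, hg⟩
  set sup : Finset (Fin (d+1)) := Finset.univ.filter (fun k : Fin (d+1) => 0 < p k) with hsup
  set A : Fin (d+1) → Finset (Fin d → Bool) :=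
    fun k => if k ∈ sup then Finset.univ.filter (fun x => wt x = (k:ℕ)) else {σ₀ k} with hA
  set S : Finset (Fin (d+1) → Fin d → Bool) := Fintype.piFinset A with hS
  -- every element of S is a selection
  have hsel : ∀ σ ∈ S, IsSelection σ := by
    intro σ hσ k
    have := Fintype.mem_piFinset.mp hσ k
    by_cases hk : k ∈ sup
    · simp only [hA, hk, if_pos, Finset.mem_filter] at this
      exact this.2
    · simp only [hA, hk, if_neg, not_false_iff, Finset.mem_singleton] at this
      rw [this]; exact hσ₀ k
  -- zero mass off support
  have hzero : ∀ k : Fin (d+1), k ∉ sup → p k = 0 := by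
    intro k hk
    simp only [hsup, Finset.mem_filter, Finset.mem_univ, true_and, not_lt] at hk
    exact le_antisymm hk (hp.1 k)
  -- the set equals the image of S
  have hset : {g | ∃ σ, IsSelection σ ∧ g = extPmf p σ} = ↑(S.image (extPmf p)) := by
    ext g
    simp only [Set.mem_setOf_eq, Finset.coe_image, Set.mem_image, Finset.mem_coe]
    constructor
    · rintro ⟨σ, hσ, rfl⟩
      refine ⟨fun k => if k ∈ sup then σ k else σ₀ k, ?_, ?_⟩
      · rw [Fintype.mem_piFinset]
        intro k
        by_cases hk : k ∈ sup <;> simp [hA, hk, hσ k, hσ₀ k]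
      · funext x
        unfold extPmf
        refine Finset.sum_congr rfl fun k _ => ?_
        by_cases hk : k ∈ sup
        · simp [hk]
        · simp [hk, hzero k hk]
    · rintro ⟨σ, hσ, rfl⟩
      exact ⟨σ, hsel σ hσ, rfl⟩
  -- injectivity of extPmf on S
  have hinj : Set.InjOn (extPmf p) ↑S := by
    intro σ hσ τ hτ heq
    have hselσ := hsel σ hσ
    have hselτ := hsel τ hτ
    funext k
    by_cases hk : k ∈ sup
    · have hpk : 0 < p k := by
        simpa [hsup] using hk
      have h1 : extPmf p τ (σ k) = p k := by
        rw [← heq, extPmf_sel_apply p σ hselσ]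
      have h2 : (∑ j, if τ j = σ k then p j else 0) ≠ 0 := by
        rw [show (∑ j, if τ j = σ k then p j else 0) = extPmf p τ (σ k) from rfl, h1]
        exact ne_of_gt hpk
      obtain ⟨j, _, hjne⟩ := Finset.exists_ne_zero_of_sum_ne_zero h2
      have hτj : τ j = σ k := by
        by_contra h; simp [h] at hjne
      have hjk : j = k := by
        apply Fin.ext
        rw [← hselτ j, hτj, hselσ k]
      rw [← hjk, hτj, hjk]
    · have e1 : σ k = σ₀ k := by
        have := Fintype.mem_piFinset.mp hσ k
        simpa [hA, hk] using this
      have e2 : τ k = σ₀ k := by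
        have := Fintype.mem_piFinset.mp hτ k
        simpa [hA, hk] using this
      rw [e1, e2]
  constructor
  · rw [hset]; exact (S.image (extPmf p)).finite_toSet
  · rw [hset, Set.ncard_coe_finset, Finset.card_image_of_injOn hinj, hS,
      Fintype.card_piFinset]
    rw [Finset.prod_filter]
    refine Finset.prod_congr rfl fun k _ => ?_
    by_cases hk : k ∈ sup
    · have : 0 < p k := by simpa [hsup] using hk
      simp [hA, hk, this, card_wt]
    · have : ¬ 0 < p k := by simpa [hsup] using hk
      simp [hA, hk, this]
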